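/- Let K/F be a cyclic cubic extension of number fields with Gal(K/F) = ⟨σ⟩. Then in K*/(K*)³ the following two subsets are equal: {α·(K*)³ : α ∈ K*, N_{K/F}(α) = 1, and σ(α)/α ∈ (K*)³} and {r·N_{K/F}(β)·(K*)³ : r ∈ F*, r³ = 1, β ∈ K*}. (Equivalently, the G-invariant part of the image of the norm-one elements of K* in K*/(K*)³ equals the image of μ₃(F)·N_{K/F}(K*).) -/

import Mathlib

section Aux

variable {F K : Type*} [Field F] [Field K] [Algebra F K] [IsGalois F K]

-- univ = {1, σ, σ²}
lemma aux_univ_eq (hdeg : Module.finrank F K = 3) (σ : K ≃ₐ[F] K)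
    (hσ : ∀ τ : K ≃ₐ[F] K, τ ∈ Subgroup.zpowers σ) [DecidableEq (K ≃ₐ[F] K)] :
    haveI : FiniteDimensional F K := Module.finite_of_finrank_pos (by rw [hdeg]; norm_num)
    (Finset.univ : Finset (K ≃ₐ[F] K)) = {1, σ, σ ^ 2} := by
  haveI : FiniteDimensional F K := Module.finite_of_finrank_pos (by rw [hdeg]; norm_num)
  have hcard : Fintype.card (K ≃ₐ[F] K) = 3 := by
    rw [← Nat.card_eq_fintype_card, IsGalois.card_aut_eq_finrank, hdeg]
  have horder : orderOf σ = 3 := by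
    rw [orderOf_eq_card_of_forall_mem_zpowers hσ, Nat.card_eq_fintype_card, hcard]
  have h1 : σ ≠ 1 := by
    intro h; rw [h, orderOf_one] at horder; norm_num at horder
  have h2 : σ ^ 2 ≠ 1 := by
    intro h
    have := orderOf_dvd_of_pow_eq_one h
    rw [horder] at this
    norm_num at this
  have h3 : σ ≠ σ ^ 2 := by
    intro h
    have : σ * 1 = σ * σ := by rw [mul_one, ← pow_two, ← h]
    exact h1 ((mul_left_cancel this).symm)
  symm
  apply Finset.eq_univ_of_card
  rw [hcard]
  rw [Finset.card_insert_of_notMem, Finset.card_insert_of_notMem, Finset.card_singleton]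
  · simpa using h3
  · simp only [Finset.mem_insert, Finset.mem_singleton]
    rintro (h | h)
    · exact h1 h.symm
    · exact h2 h.symm

lemma aux_norm_eq (hdeg : Module.finrank F K = 3) (σ : K ≃ₐ[F] K)
    (hσ : ∀ τ : K ≃ₐ[F] K, τ ∈ Subgroup.zpowers σ) (x : K) :
    algebraMap F K (Algebra.norm F x) = x * σ x * σ (σ x) := by
  haveI : FiniteDimensional F K := Module.finite_of_finrank_pos (by rw [hdeg]; norm_num)
  classical
  rw [Algebra.norm_eq_prod_automorphisms, aux_univ_eq hdeg σ hσ]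
  have horder : orderOf σ = 3 := by
    rw [orderOf_eq_card_of_forall_mem_zpowers hσ, IsGalois.card_aut_eq_finrank, hdeg]
  have h1 : σ ≠ 1 := by
    intro h; rw [h, orderOf_one] at horder; norm_num at horder
  have h2 : σ ^ 2 ≠ 1 := by
    intro h
    have := orderOf_dvd_of_pow_eq_one h
    rw [horder] at this
    norm_num at this
  have h3 : σ ≠ σ ^ 2 := by
    intro h
    have : σ * 1 = σ * σ := by rw [mul_one, ← pow_two, ← h]
    exact h1 ((mul_left_cancel this).symm)
  rw [Finset.prod_insert (by
        simp only [Finset.mem_insert, Finset.mem_singleton]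
        rintro (h | h)
        · exact h1 h.symm
        · exact h2 h.symm),
    Finset.prod_insert (by simpa using h3), Finset.prod_singleton]
  simp [pow_two, AlgEquiv.mul_apply, mul_assoc]

-- σ³ = 1 applied
lemma aux_sigma_cube (hdeg : Module.finrank F K = 3) (σ : K ≃ₐ[F] K)
    (hσ : ∀ τ : K ≃ₐ[F] K, τ ∈ Subgroup.zpowers σ) (x : K) :
    σ (σ (σ x)) = x := by
  haveI : FiniteDimensional F K := Module.finite_of_finrank_pos (by rw [hdeg]; norm_num)
  have horder : orderOf σ = 3 := by
    rw [orderOf_eq_card_of_forall_mem_zpowers hσ, IsGalois.card_aut_eq_finrank, hdeg]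
  have h : σ ^ 3 = 1 := by rw [← horder]; exact pow_orderOf_eq_one σ
  have := congrArg (fun τ : K ≃ₐ[F] K => τ x) h
  simpa [pow_succ, AlgEquiv.mul_apply] using this

-- Hilbert 90 for cyclic cubic
lemma aux_hilbert90 (hdeg : Module.finrank F K = 3) (σ : K ≃ₐ[F] K)
    (hσ : ∀ τ : K ≃ₐ[F] K, τ ∈ Subgroup.zpowers σ) (α : K)
    (hα : Algebra.norm F α = 1) : ∃ c : K, c ≠ 0 ∧ α = c / σ c := by
  haveI : FiniteDimensional F K := Module.finite_of_finrank_pos (by rw [hdeg]; norm_num)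
  classical
  have hα0 : α ≠ 0 := by
    intro h
    rw [h, Algebra.norm_zero] at hα
    exact one_ne_zero hα.symm
  have hNα : α * σ α * σ (σ α) = 1 := by
    rw [← aux_norm_eq hdeg σ hσ, hα, map_one]
  -- find θ with b ≠ 0
  have lin : LinearIndependent K (fun (f : K ≃ₐ[F] K) => (f : K → K)) :=
    LinearIndependent.comp (ι' := K ≃ₐ[F] K)
      (linearIndependent_monoidHom K K) (fun f => f)
      (fun x y h => by ext; exact DFunLike.ext_iff.1 h _)
  have hex : ∃ θ : K, θ + α * σ θ + (α * σ α) * σ (σ θ) ≠ 0 := by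
    by_contra hcon
    push_neg at hcon
    have horder : orderOf σ = 3 := by
      rw [orderOf_eq_card_of_forall_mem_zpowers hσ, IsGalois.card_aut_eq_finrank, hdeg]
    have h1 : σ ≠ 1 := by
      intro h; rw [h, orderOf_one] at horder; norm_num at horder
    have h2 : σ ^ 2 ≠ 1 := by
      intro h
      have := orderOf_dvd_of_pow_eq_one h
      rw [horder] at this
      norm_num at this
    have h3 : σ ≠ σ ^ 2 := by
      intro h
      have : σ * 1 = σ * σ := by rw [mul_one, ← pow_two, ← h]
      exact h1 ((mul_left_cancel this).symm)
    set g : (K ≃ₐ[F] K) → K := fun τ =>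
      if τ = 1 then 1 else if τ = σ then α else if τ = σ ^ 2 then α * σ α else 0 with hg
    have hsum : ∑ τ : K ≃ₐ[F] K, g τ • (τ : K → K) = 0 := by
      rw [aux_univ_eq hdeg σ hσ]
      rw [Finset.sum_insert (by
            simp only [Finset.mem_insert, Finset.mem_singleton]
            rintro (h | h)
            · exact h1 h.symm
            · exact h2 h.symm),
        Finset.sum_insert (by simpa using h3), Finset.sum_singleton]
      funext θ
      have hg1 : g 1 = 1 := if_pos rfl
      have hgσ : g σ = α := by
        simp only [hg]; rw [if_neg h1]; simp
      have hgσ2 : g (σ ^ 2) = α * σ α := by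
        simp only [hg]; rw [if_neg h2, if_neg (fun h => h3 h.symm)]; simp
      simp only [Pi.add_apply, Pi.smul_apply, Pi.zero_apply, smul_eq_mul, hg1, hgσ, hgσ2]
      have hp2 : (σ ^ 2) θ = σ (σ θ) := by simp [pow_two, AlgEquiv.mul_apply]
      rw [hp2]
      have h0 := hcon θ
      simp only [AlgEquiv.one_apply, one_mul]
      linear_combination h0
    have := Fintype.linearIndependent_iff.mp lin g hsum 1
    rw [hg] at this
    simp at this
  obtain ⟨θ, hb⟩ := hex
  set b : K := θ + α * σ θ + (α * σ α) * σ (σ θ) with hbdef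
  have hσb : α * σ b = b := by
    have h3 : σ (σ (σ θ)) = θ := aux_sigma_cube hdeg σ hσ θ
    rw [hbdef]
    simp only [map_add, map_mul]
    rw [h3]
    have : α * (σ θ + σ α * σ (σ θ) + σ α * σ (σ α) * θ)
        = α * σ θ + α * σ α * σ (σ θ) + (α * σ α * σ (σ α)) * θ := by ring
    rw [this, hNα, one_mul]
    ring
  refine ⟨b, hb, ?_⟩
  have hσb0 : σ b ≠ 0 := fun h => hb (by simpa using congrArg σ.symm h)
  rw [eq_div_iff hσb0]
  exact hσb.symm ▸ hσb



lemma aux_mu3 (hdeg : Module.finrank F K = 3) (σ : K ≃ₐ[F] K)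
    (hσ : ∀ τ : K ≃ₐ[F] K, τ ∈ Subgroup.zpowers σ) (w : K) (hw : w ^ 3 = 1) :
    σ w = w := by
  by_cases h1 : w = 1
  · rw [h1, map_one]
  have hq : w ^ 2 + w + 1 = 0 := by
    have h : (w - 1) * (w ^ 2 + w + 1) = 0 := by linear_combination hw
    rcases mul_eq_zero.mp h with h | h
    · exact absurd (sub_eq_zero.mp h) h1
    · exact h
  have hσ1 : σ w ≠ 1 := fun h => h1 (by simpa using congrArg σ.symm h)
  have hσw3 : (σ w) ^ 3 = 1 := by rw [← map_pow, hw, map_one]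
  have hσq : (σ w) ^ 2 + σ w + 1 = 0 := by
    have h : (σ w - 1) * ((σ w) ^ 2 + σ w + 1) = 0 := by linear_combination hσw3
    rcases mul_eq_zero.mp h with h | h
    · exact absurd (sub_eq_zero.mp h) hσ1
    · exact h
  have key : (w - σ w) * (w + σ w + 1) = 0 := by linear_combination hq - hσq
  rcases mul_eq_zero.mp key with h | h
  · exact (sub_eq_zero.mp h).symm
  · have hσw : σ w = w ^ 2 := by linear_combination h - hq
    have h2 : σ (σ w) = w := by
      rw [hσw, map_pow, hσw]
      have : (w ^ 2) ^ 2 = w ^ 3 * w := by ring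
      rw [this, hw, one_mul]
    exact (congrArg σ h2).symm.trans (aux_sigma_cube hdeg σ hσ w)

lemma aux_in_base (hdeg : Module.finrank F K = 3) (σ : K ≃ₐ[F] K)
    (hσ : ∀ τ : K ≃ₐ[F] K, τ ∈ Subgroup.zpowers σ) (w : K) (hfix : σ w = w) :
    ∃ r : F, algebraMap F K r = w := by
  haveI : FiniteDimensional F K := Module.finite_of_finrank_pos (by rw [hdeg]; norm_num)
  have hall : ∀ τ : K ≃ₐ[F] K, τ w = w := by
    intro τ
    obtain ⟨n, rfl⟩ := mem_powers_iff_mem_zpowers.mpr (hσ τ)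
    induction n with
    | zero => simp
    | succ n ih =>
        show (σ ^ (n + 1)) w = w
        rw [pow_succ, AlgEquiv.mul_apply, hfix]
        exact ih
  have hmem : w ∈ IntermediateField.fixedField
      (IntermediateField.fixingSubgroup (⊥ : IntermediateField F K)) := fun g => hall g
  rw [IsGalois.fixedField_fixingSubgroup, IntermediateField.mem_bot] at hmem
  exact hmem


end Aux



/-- Let `K/F` be a cyclic cubic extension of number fields with `Gal(K/F) = ⟨σ⟩`.
Identifying subsets of `K*/(K*)³` with the corresponding saturated (closed under
multiplication by nonzero cubes) subsets of `K*`, the `G`-invariant part of the image of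
the norm-one elements of `K*` in `K*/(K*)³`, namely
`{α·(K*)³ : N_{K/F}(α) = 1 and σ(α)/α ∈ (K*)³}`, equals the image of
`μ₃(F)·N_{K/F}(K*)`, namely `{r·N_{K/F}(β)·(K*)³ : r ∈ F*, r³ = 1, β ∈ K*}`. -/
theorem stmt_8 (F K : Type*) [Field F] [NumberField F] [Field K] [NumberField K]
    [Algebra F K] [IsGalois F K] (hdeg : Module.finrank F K = 3)
    (σ : K ≃ₐ[F] K) (hσ : ∀ τ : K ≃ₐ[F] K, τ ∈ Subgroup.zpowers σ) :
    {x : K | ∃ α δ : K, δ ≠ 0 ∧ x = α * δ ^ 3 ∧ Algebra.norm F α = 1 ∧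
        ∃ γ : K, σ α / α = γ ^ 3}
      = {x : K | ∃ (r : F) (β δ : K), r ^ 3 = 1 ∧ β ≠ 0 ∧ δ ≠ 0 ∧
        x = algebraMap F K (r * Algebra.norm F β) * δ ^ 3} := by
  haveI : FiniteDimensional F K := Module.finite_of_finrank_pos (by rw [hdeg]; norm_num)
  have hinj : Function.Injective (algebraMap F K) := (algebraMap F K).injective
  ext x
  simp only [Set.mem_setOf_eq]
  constructor
  · rintro ⟨α, δ, hδ, hx, hNα, γ, hγ⟩
    have hα0 : α ≠ 0 := by
      intro h; rw [h, Algebra.norm_zero] at hNα; exact one_ne_zero hNα.symm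
    have hσα0 : σ α ≠ 0 := fun h => hα0 (by simpa using congrArg σ.symm h)
    obtain ⟨c, hc0, hc⟩ := aux_hilbert90 hdeg σ hσ α hNα
    have hσc0 : σ c ≠ 0 := fun h => hc0 (by simpa using congrArg σ.symm h)
    have hσ2c0 : σ (σ c) ≠ 0 := fun h => hσc0 (by simpa using congrArg σ.symm h)
    have hγ0 : γ ≠ 0 := by
      intro h
      rw [h] at hγ
      exact (div_ne_zero hσα0 hα0) (by rw [hγ]; ring)
    set d : K := σ c / γ with hd
    have hd0 : d ≠ 0 := div_ne_zero hσc0 hγ0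
    have hσd0 : σ d ≠ 0 := fun h => hd0 (by simpa using congrArg σ.symm h)
    have hNc : algebraMap F K (Algebra.norm F c) = c * σ c * σ (σ c) :=
      aux_norm_eq hdeg σ hσ c
    have hdcube : d ^ 3 = algebraMap F K (Algebra.norm F c) := by
      rw [hNc, hd]
      have hσα : σ α = σ c / σ (σ c) := by rw [hc, map_div₀]
      have hγ3 : γ ^ 3 = (σ c * σ c) / (c * σ (σ c)) := by
        rw [← hγ, hσα, hc]; field_simp
      rw [div_pow, hγ3]
      field_simp
    clear_value d
    set w : K := σ d / d with hw
    have hw3 : w ^ 3 = 1 := by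
      have hfix3 : σ (d ^ 3) = d ^ 3 := by
        rw [hdcube]; exact σ.commutes _
      rw [hw, div_pow]
      rw [div_eq_one_iff_eq (pow_ne_zero 3 hd0)]
      rw [← map_pow]
      exact hfix3
    have hfixw : σ w = w := aux_mu3 hdeg σ hσ w hw3
    obtain ⟨r0, hr0⟩ := aux_in_base hdeg σ hσ w hfixw
    have hσdwd : σ d = w * d := by rw [hw]; field_simp
    clear_value w
    have hNd : algebraMap F K (Algebra.norm F d) = d ^ 3 := by
      rw [aux_norm_eq hdeg σ hσ d]
      have h2 : σ (σ d) = w * (w * d) := by rw [hσdwd, map_mul, hfixw, hσdwd]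
      rw [h2, hσdwd]
      linear_combination (d ^ 3) * hw3
    have hNcd : Algebra.norm F c = Algebra.norm F d :=
      hinj (by rw [hNd]; exact hdcube.symm)
    have hNd0 : Algebra.norm F d ≠ 0 := by
      rw [Algebra.norm_ne_zero_iff]; exact hd0
    have hNcd1 : Algebra.norm F (c / d) = 1 := by
      have hmul : Algebra.norm F (c / d) * Algebra.norm F d = Algebra.norm F c := by
        rw [← map_mul]; congr 1; field_simp
      apply mul_right_cancel₀ hNd0
      rw [hmul, one_mul, hNcd]
    obtain ⟨e, he0, hce⟩ := aux_hilbert90 hdeg σ hσ (c / d) hNcd1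
    have hσe0 : σ e ≠ 0 := fun h => he0 (by simpa using congrArg σ.symm h)
    have hσ2e0 : σ (σ e) ≠ 0 := fun h => hσe0 (by simpa using congrArg σ.symm h)
    have hA : c * σ e = d * e := by
      rw [div_eq_div_iff hd0 hσe0] at hce
      linear_combination hce
    have hB : σ c * σ (σ e) = σ d * σ e := by
      have := congrArg σ hA
      simpa [map_mul] using this
    have hceq : c = d * e / σ e := by
      rw [eq_div_iff hσe0]; linear_combination hA
    have hσceq : σ c = w * d * σ e / σ (σ e) := by
      rw [eq_div_iff hσ2e0]
      linear_combination hB + σ e * hσdwd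
    have hσcPoly : σ c * σ (σ e) = w * d * σ e := by
      linear_combination hB + σ e * hσdwd
    have key2 : (c * σ e ^ 3 - w ^ 2 * (e * σ e * σ (σ e)) * σ c) * σ (σ e) = 0 := by
      linear_combination (σ e ^ 2 * σ (σ e)) * hA - (w ^ 2 * e * σ e * σ (σ e)) * hσcPoly
        - (d * e * σ e ^ 2 * σ (σ e)) * hw3
    have key : c * σ e ^ 3 = w ^ 2 * (e * σ e * σ (σ e)) * σ c := by
      rcases mul_eq_zero.mp key2 with h | h
      · linear_combination h
      · exact absurd h hσ2e0
    refine ⟨r0 ^ 2, e, δ / σ e, ?_, he0, div_ne_zero hδ hσe0, ?_⟩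
    · apply hinj
      rw [map_one, map_pow, map_pow, hr0]
      have : (w ^ 2) ^ 3 = (w ^ 3) ^ 2 := by ring
      rw [this, hw3, one_pow]
    · rw [hx, map_mul, aux_norm_eq hdeg σ hσ e, map_pow, hr0, hc, div_pow]
      rw [div_mul_eq_mul_div, div_eq_iff hσc0]
      field_simp
      apply mul_right_cancel₀ hσe0
      linear_combination key
  · rintro ⟨r, β, δ, hr, hβ0, hδ0, hx⟩
    have hσβ0 : σ β ≠ 0 := fun h => hβ0 (by simpa using congrArg σ.symm h)
    have hNβ0 : Algebra.norm F β ≠ 0 := by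
      rw [Algebra.norm_ne_zero_iff]; exact hβ0
    have hr0 : r ≠ 0 := by
      intro h; rw [h] at hr; simp at hr
    have hA0 : algebraMap F K (r * Algebra.norm F β) ≠ 0 := by
      rw [map_mul]
      exact mul_ne_zero (fun h => hr0 (hinj (by rw [h, map_zero])))
        (fun h => hNβ0 (hinj (by rw [h, map_zero])))
    refine ⟨algebraMap F K (r * Algebra.norm F β) * (β⁻¹) ^ 3, β * δ,
      mul_ne_zero hβ0 hδ0, ?_, ?_, ⟨β / σ β, ?_⟩⟩
    · rw [hx]; field_simp
    · have hcalc : (algebraMap F K (r * Algebra.norm F β) * (β⁻¹) ^ 3) * β ^ 3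
          = algebraMap F K (r * Algebra.norm F β) := by field_simp
      have hN := congrArg (Algebra.norm F) hcalc
      rw [map_mul, map_pow, Algebra.norm_algebraMap, hdeg] at hN
      have hexp : (r * Algebra.norm F β) ^ 3 = (Algebra.norm F β) ^ 3 := by
        rw [mul_pow, hr, one_mul]
      rw [hexp] at hN
      apply mul_right_cancel₀ (pow_ne_zero 3 hNβ0)
      rw [one_mul]
      exact hN
    · rw [map_mul, map_pow, map_inv₀]
      have hcom : σ (algebraMap F K (r * Algebra.norm F β))
          = algebraMap F K (r * Algebra.norm F β) := σ.commutes _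
      rw [hcom]
      have h1 : algebraMap F K r ≠ 0 := fun h => hr0 (hinj (by rw [h, map_zero]))
      have h2 : algebraMap F K (Algebra.norm F β) ≠ 0 :=
        fun h => hNβ0 (hinj (by rw [h, map_zero]))
      rw [map_mul]
      field_simp
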